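/- Every induced matching of the cross-composition graph G(S) having at least k = n + |𝒞| - n/3 + 1 edges saturates the vertex q. -/

import Mathlib

open SimpleGraph

/-- `M` is a matching of `G`, viewed as a set of edges. -/
def MatchingEdges {V : Type*} (G : SimpleGraph V) (M : Set (Sym2 V)) : Prop :=
  M ⊆ G.edgeSet ∧ ∀ e ∈ M, ∀ f ∈ M, e ≠ f → ∀ v : V, v ∈ e → v ∉ f

/-- The set of `M`-saturated vertices. -/
def msat {V : Type*} (M : Set (Sym2 V)) : Set V := {v | ∃ e ∈ M, v ∈ e}

/-- `M` is an induced matching of `G`. -/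
def InducedMatchingEdges {V : Type*} (G : SimpleGraph V) (M : Set (Sym2 V)) : Prop :=
  MatchingEdges G M ∧
    ∀ u v : V, u ∈ msat M → v ∈ msat M → G.Adj u v → s(u, v) ∈ M

/-- The union `𝒞` of the families `C 1, ..., C t`. -/
def allSets (n t : ℕ) (C : Fin t → Finset (Finset (Fin n))) : Finset (Finset (Fin n)) :=
  Finset.univ.biUnion C

/-- Vertex type of the cross-composition graph: `Sum.inl a` is `v_a`;
`Sum.inr (Sum.inl (S, 0))` is the star center `w_S` and `Sum.inr (Sum.inl (S, 1))` is
the leaf `w_S^*`; `Sum.inr (Sum.inr (Sum.inl ⟨S, x⟩))` is the interface vertex `w_{S,x}`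
(for `x ∈ S`); `Sum.inr (Sum.inr (Sum.inr none))` is `q` and
`Sum.inr (Sum.inr (Sum.inr (some i)))` is `p_i`. -/
abbrev CCVert (n t : ℕ) (C : Fin t → Finset (Finset (Fin n))) : Type _ :=
  Fin n ⊕ (({S // S ∈ allSets n t C} × Fin 2) ⊕
    ((Σ S : {S // S ∈ allSets n t C}, {x : Fin n // x ∈ S.val}) ⊕ Option (Fin t)))

/-- The cross-composition graph `G(S)` (with `I` a star centered at `q`). -/
def CCGraph (n t : ℕ) (C : Fin t → Finset (Finset (Fin n))) :
    SimpleGraph (CCVert n t C) :=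
  SimpleGraph.fromRel (fun a b =>
    match a, b with
    -- v_a ~ w_{S,x} iff x = a
    | Sum.inl a, Sum.inr (Sum.inr (Sum.inl ⟨_, x⟩)) => (x : Fin n) = a
    -- w_S ~ w_S^*
    | Sum.inr (Sum.inl (S, _)), Sum.inr (Sum.inl (S', _)) => S = S'
    -- w_S ~ w_{S,x}
    | Sum.inr (Sum.inl (S, i)), Sum.inr (Sum.inr (Sum.inl ⟨S', _⟩)) => S = S' ∧ i = 0
    -- q ~ p_i
    | Sum.inr (Sum.inr (Sum.inr o)), Sum.inr (Sum.inr (Sum.inr o')) =>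
        o = none ∨ o' = none
    -- p_i ~ w_{S,x} iff S ∉ C i
    | Sum.inr (Sum.inr (Sum.inr (some i))), Sum.inr (Sum.inr (Sum.inl ⟨S, _⟩)) =>
        (S : Finset (Fin n)) ∉ C i
    | _, _ => False)

section
open scoped Classical
variable {n t : ℕ} {C : Fin t → Finset (Finset (Fin n))}

def prv (S : {S // S ∈ allSets n t C}) (i : Fin 2) : CCVert n t C := Sum.inr (Sum.inl (S, i))
def ifc (S : {S // S ∈ allSets n t C}) (x : {x : Fin n // x ∈ S.val}) : CCVert n t C :=
  Sum.inr (Sum.inr (Sum.inl ⟨S, x⟩))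
def pvv (i : Fin t) : CCVert n t C := Sum.inr (Sum.inr (Sum.inr (some i)))
def qvv : CCVert n t C := Sum.inr (Sum.inr (Sum.inr none))

lemma edge_structure {M : Set (Sym2 (CCVert n t C))}
    (hsub : M ⊆ (CCGraph n t C).edgeSet) (hq : (qvv : CCVert n t C) ∉ msat M)
    {e : Sym2 (CCVert n t C)} (he : e ∈ M) :
    (∃ a S x, e = s(Sum.inl a, ifc S x) ∧ (x : Fin n) = a) ∨
    (∃ S, e = s(prv S 0, prv S 1)) ∨
    (∃ S x, e = s(prv S 0, ifc S x)) ∨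
    (∃ i S x, e = s(pvv i, ifc S x) ∧ (S : Finset (Fin n)) ∉ C i) := by
  have hadj := hsub he
  revert he
  induction e using Sym2.ind with | _ u v =>
  intro he
  rw [SimpleGraph.mem_edgeSet, CCGraph, SimpleGraph.fromRel_adj] at hadj
  obtain ⟨hne, hrel⟩ := hadj
  rcases u with a | (⟨S, i⟩ | (⟨S, x⟩ | (_ | i))) <;>
    rcases v with a' | (⟨S', i'⟩ | (⟨S', x'⟩ | (_ | i')))
  all_goals simp only [] at hrel
  all_goals try exact (hrel.elim id id).elim
  all_goals try exact (hne rfl).elim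
  · -- inl, ifc
    rcases hrel with h | h
    · exact Or.inl ⟨a, S', x', rfl, h⟩
    · exact h.elim
  · -- pair, pair
    have hS : S = S' := by rcases hrel with h | h; exacts [h, h.symm]
    subst hS
    have hii : i ≠ i' := fun h => hne (by rw [h])
    fin_cases i <;> fin_cases i'
    · exact absurd rfl hii
    · exact Or.inr (Or.inl ⟨S, rfl⟩)
    · exact Or.inr (Or.inl ⟨S, Sym2.eq_swap⟩)
    · exact absurd rfl hii
  · -- pair, ifc
    rcases hrel with ⟨h1, h2⟩ | h
    · subst h1; subst h2; exact Or.inr (Or.inr (Or.inl ⟨S, x', rfl⟩))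
    · exact h.elim
  · -- ifc, inl
    rcases hrel with h | h
    · exact h.elim
    · exact Or.inl ⟨a', S, x, Sym2.eq_swap, h⟩
  · -- ifc, pair
    rcases hrel with h | ⟨h1, h2⟩
    · exact h.elim
    · subst h1; subst h2; exact Or.inr (Or.inr (Or.inl ⟨S', x, Sym2.eq_swap⟩))
  · -- ifc, p
    rcases hrel with h | h
    · exact h.elim
    · exact Or.inr (Or.inr (Or.inr ⟨i', S, x, Sym2.eq_swap, h⟩))
  · -- q, p
    exact (hq ⟨_, he, Sym2.mem_mk_left _ _⟩).elim
  · -- p, ifc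
    rcases hrel with h | h
    · exact Or.inr (Or.inr (Or.inr ⟨i, S', x', rfl, h⟩))
    · exact h.elim
  · -- p, q
    exact (hq ⟨_, he, Sym2.mem_mk_right _ _⟩).elim
  · -- p, p
    rcases hrel with (h | h) | (h | h) <;> cases h

def getS : CCVert n t C → Option {S // S ∈ allSets n t C}
  | Sum.inr (Sum.inl (S, _)) => some S
  | Sum.inr (Sum.inr (Sum.inl ⟨S, _⟩)) => some S
  | _ => none

noncomputable def sOf (e : Sym2 (CCVert n t C)) : Finset (Fin n) :=
  if h : ∃ S : {S // S ∈ allSets n t C}, ∃ x, ifc S x ∈ e then (h.choose : Finset (Fin n))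
  else if h2 : ∃ S : {S // S ∈ allSets n t C}, ∃ i, prv S i ∈ e then (h2.choose : Finset (Fin n))
  else ∅

noncomputable def aOf (hn : 0 < n) (e : Sym2 (CCVert n t C)) : Fin n :=
  if h : ∃ a : Fin n, Sum.inl a ∈ e then h.choose else ⟨0, hn⟩

lemma sOf_a (a : Fin n) (S) (x) : sOf (s(Sum.inl a, ifc S x) : Sym2 (CCVert n t C)) = ↑S := by
  have h : ∃ S' : {S // S ∈ allSets n t C}, ∃ x',
      ifc S' x' ∈ (s(Sum.inl a, ifc S x) : Sym2 (CCVert n t C)) := ⟨S, x, Sym2.mem_mk_right _ _⟩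
  rw [sOf, dif_pos h]
  obtain ⟨x', hx'⟩ := h.choose_spec
  rw [Sym2.mem_iff] at hx'
  rcases hx' with h' | h'
  · exact absurd h' (by simp [ifc])
  · have := congrArg getS h'
    simp only [getS, ifc, Option.some.injEq] at this
    exact congrArg Subtype.val this

lemma sOf_c (S) (x) : sOf (s(prv S 0, ifc S x) : Sym2 (CCVert n t C)) = ↑S := by
  have h : ∃ S' : {S // S ∈ allSets n t C}, ∃ x',
      ifc S' x' ∈ (s(prv S 0, ifc S x) : Sym2 (CCVert n t C)) := ⟨S, x, Sym2.mem_mk_right _ _⟩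
  rw [sOf, dif_pos h]
  obtain ⟨x', hx'⟩ := h.choose_spec
  rw [Sym2.mem_iff] at hx'
  rcases hx' with h' | h'
  · exact absurd h' (by simp [ifc, prv])
  · have := congrArg getS h'
    simp only [getS, ifc, Option.some.injEq] at this
    exact congrArg Subtype.val this

lemma sOf_d (i : Fin t) (S) (x) : sOf (s(pvv i, ifc S x) : Sym2 (CCVert n t C)) = ↑S := by
  have h : ∃ S' : {S // S ∈ allSets n t C}, ∃ x',
      ifc S' x' ∈ (s(pvv i, ifc S x) : Sym2 (CCVert n t C)) := ⟨S, x, Sym2.mem_mk_right _ _⟩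
  rw [sOf, dif_pos h]
  obtain ⟨x', hx'⟩ := h.choose_spec
  rw [Sym2.mem_iff] at hx'
  rcases hx' with h' | h'
  · exact absurd h' (by simp [ifc, pvv])
  · have := congrArg getS h'
    simp only [getS, ifc, Option.some.injEq] at this
    exact congrArg Subtype.val this

lemma sOf_b (S) : sOf (s(prv S 0, prv S 1) : Sym2 (CCVert n t C)) = ↑S := by
  have h : ¬ ∃ S' : {S // S ∈ allSets n t C}, ∃ x',
      ifc S' x' ∈ (s(prv S 0, prv S 1) : Sym2 (CCVert n t C)) := by
    rintro ⟨S', x', hx'⟩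
    rw [Sym2.mem_iff] at hx'
    rcases hx' with h' | h' <;> exact absurd h' (by simp [ifc, prv])
  have h2 : ∃ S' : {S // S ∈ allSets n t C}, ∃ i',
      prv S' i' ∈ (s(prv S 0, prv S 1) : Sym2 (CCVert n t C)) := ⟨S, 0, Sym2.mem_mk_left _ _⟩
  rw [sOf, dif_neg h, dif_pos h2]
  obtain ⟨i', hi'⟩ := h2.choose_spec
  rw [Sym2.mem_iff] at hi'
  rcases hi' with h' | h' <;>
  · have := congrArg getS h'
    simp only [getS, prv, Option.some.injEq] at this
    exact congrArg Subtype.val this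

lemma aOf_a (hn : 0 < n) (a : Fin n) (S) (x) :
    aOf hn (s(Sum.inl a, ifc S x) : Sym2 (CCVert n t C)) = a := by
  have h : ∃ a' : Fin n, Sum.inl a' ∈ (s(Sum.inl a, ifc S x) : Sym2 (CCVert n t C)) :=
    ⟨a, Sym2.mem_mk_left _ _⟩
  rw [aOf, dif_pos h]
  have hx' := h.choose_spec
  rw [Sym2.mem_iff] at hx'
  rcases hx' with h' | h'
  · exact Sum.inl_injective h'
  · exact absurd h' (by simp [ifc])

lemma adj_prv_ifc (S) (x) : (CCGraph n t C).Adj (prv S 0) (ifc S x) := by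
  rw [CCGraph, SimpleGraph.fromRel_adj]
  exact ⟨by simp [prv, ifc], Or.inl ⟨rfl, rfl⟩⟩

lemma adj_pv_ifc {i : Fin t} {S : {S // S ∈ allSets n t C}} (h : (S : Finset (Fin n)) ∉ C i) (x) :
    (CCGraph n t C).Adj (pvv i) (ifc S x) := by
  rw [CCGraph, SimpleGraph.fromRel_adj]
  exact ⟨by simp [pvv, ifc], Or.inl h⟩

end


section
open scoped Classical
variable {n t : ℕ} {C : Fin t → Finset (Finset (Fin n))} {M : Set (Sym2 (CCVert n t C))}

lemma eq_of_shared (hM : MatchingEdges (CCGraph n t C) M) {e f : Sym2 (CCVert n t C)}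
    (he : e ∈ M) (hf : f ∈ M) {v : CCVert n t C} (hv : v ∈ e) (hv' : v ∈ f) : e = f := by
  by_contra hne
  exact hM.2 e he f hf hne v hv hv'

lemma conflict (hM : InducedMatchingEdges (CCGraph n t C) M)
    {e f : Sym2 (CCVert n t C)} {S : {S // S ∈ allSets n t C}} {y : {x // x ∈ S.val}}
    (he : e ∈ M) (hf : f ∈ M) (hef : e ≠ f) (hy : ifc S y ∈ f)
    (hcase : prv S 0 ∈ e ∨ ∃ i, pvv i ∈ e ∧ (S : Finset (Fin n)) ∉ C i) : False := by
  rcases hcase with h | ⟨i, hp, hnotin⟩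
  · have hg : s(prv S 0, ifc S y) ∈ M :=
      hM.2 _ _ ⟨e, he, h⟩ ⟨f, hf, hy⟩ (adj_prv_ifc S y)
    have h1 : s(prv S 0, ifc S y) = e := eq_of_shared hM.1 hg he (Sym2.mem_mk_left _ _) h
    have h2 : ifc S y ∈ e := h1 ▸ Sym2.mem_mk_right _ _
    exact hef (eq_of_shared hM.1 he hf h2 hy)
  · have hg : s(pvv i, ifc S y) ∈ M :=
      hM.2 _ _ ⟨e, he, hp⟩ ⟨f, hf, hy⟩ (adj_pv_ifc hnotin y)
    have h1 : s(pvv i, ifc S y) = e := eq_of_shared hM.1 hg he (Sym2.mem_mk_left _ _) hp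
    have h2 : ifc S y ∈ e := h1 ▸ Sym2.mem_mk_right _ _
    exact hef (eq_of_shared hM.1 he hf h2 hy)

end


/-- Every induced matching of the cross-composition graph with at least
`k = n + |𝒞| - n/3 + 1` edges saturates the vertex `q`. -/
theorem large_induced_matching_saturates_q (n t m : ℕ) (hn3 : 3 ∣ n) (hn : 0 < n)
    (C : Fin t → Finset (Finset (Fin n)))
    (hm : ∀ i, (C i).card = m)
    (h3 : ∀ i, ∀ s ∈ C i, s.card = 3)
    (hne : ∀ i j : Fin t, i ≠ j → C i ≠ C j) :
    ∀ M : Set (Sym2 (CCVert n t C)), InducedMatchingEdges (CCGraph n t C) M →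
      n + (allSets n t C).card - n / 3 + 1 ≤ M.ncard →
      (Sum.inr (Sum.inr (Sum.inr none)) : CCVert n t C) ∈ msat M := by
  classical
  intro M hM hcard
  by_contra hq
  have hq' : (qvv : CCVert n t C) ∉ msat M := hq
  have hfin : M.Finite := Set.toFinite M
  have hcard' : M.ncard = hfin.toFinset.card := Set.ncard_eq_toFinset_card M hfin
  set Mf := hfin.toFinset with hMfdef
  have hmemM : ∀ e, e ∈ Mf → e ∈ M := fun e h => (Set.Finite.mem_toFinset hfin).mp h
  have hall3 : ∀ s ∈ allSets n t C, s.card = 3 := by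
    intro s hs
    rw [allSets, Finset.mem_biUnion] at hs
    obtain ⟨i, _, hi⟩ := hs
    exact h3 i s hi
  set MV := Mf.filter (fun e => ∃ a : Fin n, Sum.inl a ∈ e) with hMVdef
  set MR := Mf.filter (fun e => ¬ ∃ a : Fin n, Sum.inl a ∈ e) with hMRdef
  have hsplit : MV.card + MR.card = Mf.card :=
    Finset.card_filter_add_card_filter_not _
  have hMV : ∀ e ∈ MV, ∃ a S x, e = s(Sum.inl a, ifc S x) ∧ (x : Fin n) = a := by
    intro e he
    have heM := hmemM e (Finset.mem_of_mem_filter e he)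
    have hyes := (Finset.mem_filter.mp he).2
    rcases edge_structure hM.1.1 hq' heM with h | ⟨S, rfl⟩ | ⟨S, x, rfl⟩ | ⟨i, S, x, rfl, _⟩
    · exact h
    · obtain ⟨a, ha⟩ := hyes
      rw [Sym2.mem_iff] at ha
      rcases ha with h' | h' <;> simp [prv] at h'
    · obtain ⟨a, ha⟩ := hyes
      rw [Sym2.mem_iff] at ha
      rcases ha with h' | h' <;> simp [prv, ifc] at h'
    · obtain ⟨a, ha⟩ := hyes
      rw [Sym2.mem_iff] at ha
      rcases ha with h' | h' <;> simp [pvv, ifc] at h'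
  have hMR : ∀ e ∈ MR, ∃ S : {S // S ∈ allSets n t C}, sOf e = ↑S ∧
      ((∃ x, e = s(prv S 0, ifc S x)) ∨ (e = s(prv S 0, prv S 1)) ∨
       (∃ i x, e = s(pvv i, ifc S x) ∧ (S : Finset (Fin n)) ∉ C i)) := by
    intro e he
    have heM := hmemM e (Finset.mem_of_mem_filter e he)
    have hni := (Finset.mem_filter.mp he).2
    rcases edge_structure hM.1.1 hq' heM with ⟨a, S, x, rfl, _⟩ | ⟨S, rfl⟩ | ⟨S, x, rfl⟩ |
      ⟨i, S, x, rfl, hSi⟩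
    · exact absurd ⟨a, Sym2.mem_mk_left _ _⟩ hni
    · exact ⟨S, sOf_b S, Or.inr (Or.inl rfl)⟩
    · exact ⟨S, sOf_c S x, Or.inl ⟨x, rfl⟩⟩
    · exact ⟨S, sOf_d i S x, Or.inr (Or.inr ⟨i, x, rfl, hSi⟩)⟩
  set T := MV.image sOf with hTdef
  set A := MV.image (aOf hn) with hAdef
  have hAinj : Set.InjOn (aOf hn) (↑MV : Set (Sym2 (CCVert n t C))) := by
    intro e he f hf hef
    obtain ⟨a, S, x, he', _⟩ := hMV e (Finset.mem_coe.mp he)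
    obtain ⟨a', S', x', hf', _⟩ := hMV f (Finset.mem_coe.mp hf)
    rw [he', hf', aOf_a, aOf_a] at hef
    subst hef
    have heM : e ∈ M := hmemM e (Finset.mem_of_mem_filter e (Finset.mem_coe.mp he))
    have hfM : f ∈ M := hmemM f (Finset.mem_of_mem_filter f (Finset.mem_coe.mp hf))
    exact eq_of_shared hM.1 heM hfM (he' ▸ Sym2.mem_mk_left _ _) (hf' ▸ Sym2.mem_mk_left _ _)
  have hcardA : A.card = MV.card := Finset.card_image_of_injOn hAinj
  have hAsub : A ⊆ T.biUnion id := by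
    intro a ha
    obtain ⟨e, heMV, rfl⟩ := Finset.mem_image.mp ha
    obtain ⟨a', S, x, he', hxa⟩ := hMV e heMV
    rw [Finset.mem_biUnion]
    refine ⟨↑S, Finset.mem_image.mpr ⟨e, heMV, by rw [he', sOf_a]⟩, ?_⟩
    rw [he', aOf_a]
    exact hxa ▸ x.2
  have hTsub : T ⊆ allSets n t C := by
    intro s hs
    obtain ⟨e, heMV, rfl⟩ := Finset.mem_image.mp hs
    obtain ⟨a, S, x, he', _⟩ := hMV e heMV
    rw [he', sOf_a]
    exact S.2
  have hA3T : A.card ≤ 3 * T.card := by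
    calc A.card ≤ (T.biUnion id).card := Finset.card_le_card hAsub
      _ ≤ ∑ s ∈ T, (id s).card := Finset.card_biUnion_le
      _ = ∑ _s ∈ T, 3 := Finset.sum_congr rfl (fun s hs => hall3 s (hTsub hs))
      _ = 3 * T.card := by rw [Finset.sum_const, smul_eq_mul, mul_comm]
  have hAn : A.card ≤ n := by
    have := Finset.card_le_univ A
    simpa using this
  have hMRbound : MR.card ≤ ((allSets n t C) \ T).card := by
    apply Finset.card_le_card_of_injOn sOf
    · intro e heMR
      obtain ⟨S, hSe, hcases⟩ := hMR e heMR
      rw [Finset.mem_coe, Finset.mem_sdiff]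
      refine ⟨hSe ▸ S.2, ?_⟩
      intro hmemT
      obtain ⟨f, hfMV, hsf⟩ := Finset.mem_image.mp hmemT
      obtain ⟨a, S', x', hf', _⟩ := hMV f hfMV
      have hS'S : S' = S := by
        refine Subtype.ext ?_
        rw [← sOf_a a S' x', ← hf', hsf, hSe]
      subst hS'S
      have hfM : f ∈ M := hmemM f (Finset.mem_of_mem_filter f hfMV)
      have heM : e ∈ M := hmemM e (Finset.mem_of_mem_filter e heMR)
      have hef : e ≠ f := by
        rintro rfl
        exact (Finset.mem_filter.mp heMR).2 ⟨a, hf' ▸ Sym2.mem_mk_left _ _⟩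
      have hyf : ifc S' x' ∈ f := hf' ▸ Sym2.mem_mk_right _ _
      rcases hcases with ⟨x, rfl⟩ | rfl | ⟨i, x, rfl, hSi⟩
      · exact conflict hM heM hfM hef hyf (Or.inl (Sym2.mem_mk_left _ _))
      · exact conflict hM heM hfM hef hyf (Or.inl (Sym2.mem_mk_left _ _))
      · exact conflict hM heM hfM hef hyf (Or.inr ⟨i, Sym2.mem_mk_left _ _, hSi⟩)
    · intro e heMR f hfMR hsef
      by_contra hef
      obtain ⟨S, hSe, hce⟩ := hMR e (Finset.mem_coe.mp heMR)
      obtain ⟨S', hSf, hcf⟩ := hMR f (Finset.mem_coe.mp hfMR)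
      have hSS' : S = S' := Subtype.ext (by rw [← hSe, ← hSf, hsef])
      subst hSS'
      have heM : e ∈ M := hmemM e (Finset.mem_of_mem_filter e (Finset.mem_coe.mp heMR))
      have hfM : f ∈ M := hmemM f (Finset.mem_of_mem_filter f (Finset.mem_coe.mp hfMR))
      rcases hce with ⟨x, rfl⟩ | rfl | ⟨i, x, rfl, hSi⟩ <;>
        rcases hcf with ⟨y, rfl⟩ | rfl | ⟨j, y, rfl, hSj⟩
      · exact hef (eq_of_shared hM.1 heM hfM (Sym2.mem_mk_left _ _) (Sym2.mem_mk_left _ _))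
      · exact hef (eq_of_shared hM.1 heM hfM (Sym2.mem_mk_left _ _) (Sym2.mem_mk_left _ _))
      · exact conflict hM hfM heM (Ne.symm hef) (Sym2.mem_mk_right _ _)
          (Or.inr ⟨j, Sym2.mem_mk_left _ _, hSj⟩)
      · exact hef (eq_of_shared hM.1 heM hfM (Sym2.mem_mk_left _ _) (Sym2.mem_mk_left _ _))
      · exact hef (eq_of_shared hM.1 heM hfM (Sym2.mem_mk_left _ _) (Sym2.mem_mk_left _ _))
      · exact conflict hM heM hfM hef (Sym2.mem_mk_right _ _)
          (Or.inl (Sym2.mem_mk_left _ _))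
      · exact conflict hM heM hfM hef (Sym2.mem_mk_right _ _)
          (Or.inr ⟨i, Sym2.mem_mk_left _ _, hSi⟩)
      · exact conflict hM hfM heM (Ne.symm hef) (Sym2.mem_mk_right _ _)
          (Or.inl (Sym2.mem_mk_left _ _))
      · exact conflict hM heM hfM hef (Sym2.mem_mk_right _ _)
          (Or.inr ⟨i, Sym2.mem_mk_left _ _, hSi⟩)
  have hsdiff : ((allSets n t C) \ T).card = (allSets n t C).card - T.card :=
    Finset.card_sdiff_of_subset hTsub
  have hTle : T.card ≤ (allSets n t C).card := Finset.card_le_card hTsub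
  obtain ⟨k, rfl⟩ := hn3
  omega
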